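/- Let I ⊆ M_m be a decreasing monomial set with r = max_{f∈I} deg(f), let f,g ∈ I_r and h = gcd(f,g). Then LTA(m,2)·h · (LTA(m,2)·(f/h) + LTA(m,2)·(g/h)) = LTA(m,2)_h·h · (LTA(m,2)_f·(f/h) + LTA(m,2)_g·(g/h)). -/
import Mathlib


open Finset Pointwise

/-- Points of the affine space `F_2^m`. -/
abbrev Point (m : ℕ) := Fin m → ZMod 2

/-- The ring `R_m = F_2[x_0,…,x_{m-1}]/(x_i^2 - x_i)`, identified with the ring of
functions `F_2^m → F_2` via the evaluation isomorphism `ev`. -/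
abbrev Fn (m : ℕ) := Point m → ZMod 2

/-- The monomial `∏_{i ∈ S} x_i` (as the function it evaluates to). -/
def monFn (m : ℕ) (S : Finset (Fin m)) : Fn m := fun u => ∏ i ∈ S, u i

/-- Hamming weight of `ev(P)`: the number of points where `P` takes the value 1. -/
def wt (m : ℕ) (P : Fn m) : ℕ := (Finset.univ.filter fun u => P u = 1).card

/-- The monomial code `C(I)`: the `F_2`-span of the evaluations of the monomials in `I`. -/
def code (m : ℕ) (I : Set (Finset (Fin m))) : Submodule (ZMod 2) (Fn m) :=
  Submodule.span (ZMod 2) (monFn m '' I)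

/-- `f ≼_sh g` for monomials of equal degree: the sorted index lists compare entrywise. -/
def shLE (m : ℕ) (S T : Finset (Fin m)) : Prop :=
  S.card = T.card ∧
    ∀ (ℓ : ℕ) (hS : ℓ < (S.sort (· ≤ ·)).length) (hT : ℓ < (T.sort (· ≤ ·)).length),
      (S.sort (· ≤ ·)).get ⟨ℓ, hS⟩ ≤ (T.sort (· ≤ ·)).get ⟨ℓ, hT⟩

/-- `f ≼ g` iff there is a monomial `g*` with `f ≼_sh g* ≼_w g`. -/
def pre (m : ℕ) (S T : Finset (Fin m)) : Prop :=
  ∃ U : Finset (Fin m), shLE m S U ∧ U ⊆ T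

/-- A decreasing set of monomials. -/
def Decreasing (m : ℕ) (I : Set (Finset (Fin m))) : Prop :=
  ∀ f ∈ I, ∀ g : Finset (Fin m), pre m g f → g ∈ I

/-- The affine map `u ↦ B u + ε` on `F_2^m`. -/
def affMap (m : ℕ) (B : Fin m → Fin m → ZMod 2) (ε : Point m) (u : Point m) : Point m :=
  fun i => (∑ j, B i j * u j) + ε i

/-- `B` is lower triangular with unit diagonal. -/
def IsLT (m : ℕ) (B : Fin m → Fin m → ZMod 2) : Prop :=
  (∀ i, B i i = 1) ∧ ∀ i j : Fin m, i < j → B i j = 0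

/-- The action of `(B,ε) ∈ LTA(m,2)` on `R_m`: substitute `x_i ↦ x_i + Σ_{j<i} b_{i,j} x_j + ε_i`.
In the function representation this is precomposition with the affine map. -/
def act (m : ℕ) (B : Fin m → Fin m → ZMod 2) (ε : Point m) (P : Fn m) : Fn m :=
  fun u => P (affMap m B ε u)

/-- The orbit `LTA(m,2)·P`. -/
def orbit (m : ℕ) (P : Fn m) : Set (Fn m) :=
  {Q | ∃ B ε, IsLT m B ∧ Q = act m B ε P}

/-- Membership in the subgroup `LTA(m,2)_g` for the monomial `g` with index set `S`:
`ε_i = 0` if `i ∉ ind(g)`, and `b_{i,j} = 0` (off the diagonal) if `i ∉ ind(g)` or `j ∈ ind(g)`. -/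
def IsLTsub (m : ℕ) (S : Finset (Fin m)) (B : Fin m → Fin m → ZMod 2) (ε : Point m) : Prop :=
  IsLT m B ∧ (∀ i, i ∉ S → ε i = 0) ∧
    ∀ i j : Fin m, j ≠ i → (i ∉ S ∨ j ∈ S) → B i j = 0

/-- The orbit `LTA(m,2)_g · P` where `S = ind(g)`. -/
def orbitSub (m : ℕ) (S : Finset (Fin m)) (P : Fn m) : Set (Fn m) :=
  {Q | ∃ B ε, IsLTsub m S B ε ∧ Q = act m B ε P}

/-- `λ_f(i) = |{j : j < i, j ∉ ind(f)}|` where `S = ind(f)`. -/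
def lam (m : ℕ) (S : Finset (Fin m)) (i : Fin m) : ℕ :=
  (Finset.univ.filter fun j => j < i ∧ j ∉ S).card

/-- `|λ_f(g)| = Σ_{i ∈ ind(g)} λ_f(i)`. -/
def lamSum (m : ℕ) (S T : Finset (Fin m)) : ℕ := ∑ i ∈ T, lam m S i

/-- The affine form `c + Σ_i a_i x_i`. -/
def affForm (m : ℕ) (c : ZMod 2) (a : Point m) : Fn m := fun u => c + ∑ i, a i * u i

/-- `deg(P) ≤ r`: `P` lies in the span of the (multilinear) monomials of degree at most `r`. -/
def degLE (m : ℕ) (P : Fn m) (r : ℕ) : Prop :=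
  P ∈ Submodule.span (ZMod 2)
    {Q : Fn m | ∃ S : Finset (Fin m), S.card ≤ r ∧ Q = monFn m S}


namespace Stmt9
variable {m : ℕ}

def lf (c : Fin m → ZMod 2) (a : Fin m → Fin m → ZMod 2) (i : Fin m) : Fn m :=
  fun u => u i + c i + ∑ j, a i j * u j

def pp (S : Finset (Fin m)) (c : Fin m → ZMod 2) (a : Fin m → Fin m → ZMod 2) : Fn m :=
  fun u => ∏ i ∈ S, lf c a i u

def SL (a : Fin m → Fin m → ZMod 2) : Prop := ∀ i j : Fin m, ¬ j < i → a i j = 0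

def Avoids (T : Finset (Fin m)) (a : Fin m → Fin m → ZMod 2) : Prop :=
  ∀ i j : Fin m, j ∈ T → a i j = 0

lemma z2 : ∀ w v : ZMod 2, w * (v + w + 1) = w * v := by decide
lemma zne : ∀ x : ZMod 2, x ≠ 0 → x = 1 := by decide

lemma act_monFn (B : Fin m → Fin m → ZMod 2) (ε : Point m) (S : Finset (Fin m))
    (hdiag : ∀ i, B i i = 1) :
    act m B ε (monFn m S) = pp S ε (fun i j => if j = i then 0 else B i j) := by
  funext u
  refine Finset.prod_congr rfl fun i _ => ?_
  show (∑ j, B i j * u j) + ε i = u i + ε i + ∑ j, (if j = i then 0 else B i j) * u j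
  have : (∑ j, B i j * u j)
      = ∑ j, ((if j = i then 0 else B i j) * u j + if j = i then u j else 0) := by
    refine Finset.sum_congr rfl fun j _ => ?_
    by_cases hji : j = i <;> simp [hji, hdiag]
  rw [this, Finset.sum_add_distrib, Finset.sum_ite_eq' Finset.univ i u]
  simp; ring

lemma pp_congr {S : Finset (Fin m)} {c c' : Fin m → ZMod 2} {a a' : Fin m → Fin m → ZMod 2}
    (hc : ∀ i ∈ S, c i = c' i) (ha : ∀ i ∈ S, a i = a' i) : pp S c a = pp S c' a' := by
  funext u
  refine Finset.prod_congr rfl fun i hi => ?_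
  show u i + c i + ∑ j, a i j * u j = u i + c' i + ∑ j, a' i j * u j
  rw [hc i hi, ha i hi]

lemma orbit_eq (S : Finset (Fin m)) :
    orbit m (monFn m S) = {P | ∃ c a, SL a ∧ P = pp S c a} := by
  ext P
  constructor
  · rintro ⟨B, ε, ⟨hdiag, hlt⟩, rfl⟩
    refine ⟨ε, fun i j => if j = i then 0 else B i j, ?_, act_monFn B ε S hdiag⟩
    intro i j hij
    by_cases hji : j = i
    · simp [hji]
    · simp only [if_neg hji]
      exact hlt i j (lt_of_le_of_ne (not_lt.mp hij) (Ne.symm hji))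
  · rintro ⟨c, a, hSL, rfl⟩
    refine ⟨fun i j => if j = i then 1 else a i j, c, ⟨⟨fun i => by simp, ?_⟩, ?_⟩⟩
    · intro i j hij
      dsimp only
      rw [if_neg (by rintro rfl; exact absurd hij (lt_irrefl _))]
      exact hSL i j (by omega)
    · rw [act_monFn _ _ _ (fun i => by simp)]
      refine pp_congr (fun _ _ => rfl) (fun i _ => ?_)
      funext j
      by_cases hji : j = i <;> simp [hji, hSL i i (lt_irrefl i)]

lemma orbitSub_eq (S T : Finset (Fin m)) (hST : S ⊆ T) :
    orbitSub m T (monFn m S) = {P | ∃ c a, SL a ∧ Avoids T a ∧ P = pp S c a} := by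
  ext P
  constructor
  · rintro ⟨B, ε, ⟨⟨hdiag, hlt⟩, hε, hB⟩, rfl⟩
    refine ⟨ε, fun i j => if j = i then 0 else B i j, ?_, ?_, act_monFn B ε S hdiag⟩
    · intro i j hij
      by_cases hji : j = i
      · simp [hji]
      · simp only [if_neg hji]
        exact hlt i j (lt_of_le_of_ne (not_lt.mp hij) (Ne.symm hji))
    · intro i j hj
      by_cases hji : j = i
      · simp [hji]
      · simp only [if_neg hji]
        exact hB i j hji (Or.inr hj)
  · rintro ⟨c, a, hSL, hAv, rfl⟩
    refine ⟨fun i j => if j = i then 1 else if i ∈ S then a i j else 0,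
      fun i => if i ∈ S then c i else 0, ⟨⟨⟨fun i => by simp, ?_⟩, ?_, ?_⟩, ?_⟩⟩
    · intro i j hij
      dsimp only
      rw [if_neg (by rintro rfl; exact absurd hij (lt_irrefl _))]
      by_cases hiS : i ∈ S
      · simp [hiS, hSL i j (by omega)]
      · simp [hiS]
    · intro i hiT
      simp only [if_neg (fun h => hiT (hST h))]
    · intro i j hji hor
      dsimp only
      rw [if_neg hji]
      by_cases hiS : i ∈ S
      · rcases hor with h | h
        · exact absurd (hST hiS) h
        · simp [hiS, hAv i j h]
      · simp [hiS]
    · rw [act_monFn _ _ _ (fun i => by simp)]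
      refine pp_congr (fun i hi => by simp [hi]) (fun i hi => ?_)
      funext j
      by_cases hji : j = i <;> simp [hji, hi, hSL i i (lt_irrefl i)]

end Stmt9

namespace Stmt9
variable {m : ℕ}

def stepRow (a asrc : Fin m → Fin m → ZMod 2) (i j : Fin m) : Fin m → ZMod 2 :=
  fun j' => a i j' + asrc j j' + if j' = j then 1 else 0

def stepC (c csrc : Fin m → ZMod 2) (i j : Fin m) : Fin m → ZMod 2 :=
  Function.update c i (c i + csrc j + 1)

def stepA (a asrc : Fin m → Fin m → ZMod 2) (i j : Fin m) : Fin m → Fin m → ZMod 2 :=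
  Function.update a i (stepRow a asrc i j)

lemma lf_step_ne {c csrc : Fin m → ZMod 2} {a asrc : Fin m → Fin m → ZMod 2} {i j k : Fin m}
    (hk : k ≠ i) : lf (stepC c csrc i j) (stepA a asrc i j) k = lf c a k := by
  funext u
  simp [lf, stepC, stepA, Function.update_of_ne hk]

lemma lf_step_eq (c csrc : Fin m → ZMod 2) (a asrc : Fin m → Fin m → ZMod 2) (i j : Fin m)
    (u : Point m) :
    lf (stepC c csrc i j) (stepA a asrc i j) i u = lf c a i u + lf csrc asrc j u + 1 := by
  simp only [lf, stepC, stepA, Function.update_self, stepRow]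
  have : ∑ j', (a i j' + asrc j j' + if j' = j then 1 else 0) * u j'
      = (∑ j', a i j' * u j') + (∑ j', asrc j j' * u j') + u j := by
    have : ∀ j' ∈ Finset.univ, (a i j' + asrc j j' + if j' = j then 1 else 0) * u j'
        = a i j' * u j' + asrc j j' * u j' + if j' = j then u j' else 0 := by
      intro j' _
      by_cases hj' : j' = j <;> simp [hj'] <;> ring
    rw [Finset.sum_congr rfl this, Finset.sum_add_distrib, Finset.sum_add_distrib,
      Finset.sum_ite_eq' Finset.univ j u]
    simp
  rw [this]
  ring

lemma SL_step {a asrc : Fin m → Fin m → ZMod 2} (hSL : SL a) (hsrc : SL asrc)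
    {i j : Fin m} (hji : j < i) : SL (stepA a asrc i j) := by
  intro k j' hj'
  by_cases hk : k = i
  · subst hk
    simp only [stepA, Function.update_self, stepRow]
    rw [hSL k j' hj', hsrc j j' (fun hlt => hj' (hlt.trans hji)),
      if_neg (by rintro rfl; exact hj' hji)]
    simp
  · simp only [stepA, Function.update_of_ne hk]
    exact hSL k j' hj'

-- product invariance, within one product
lemma pp_step_self (S : Finset (Fin m)) (c : Fin m → ZMod 2) (a : Fin m → Fin m → ZMod 2)
    (i j : Fin m) (hi : i ∈ S) (hj : j ∈ S) (hij : j ≠ i) :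
    pp S (stepC c c i j) (stepA a a i j) = pp S c a := by
  funext u
  show ∏ k ∈ S, lf (stepC c c i j) (stepA a a i j) k u = ∏ k ∈ S, lf c a k u
  rw [← Finset.mul_prod_erase S _ hi, ← Finset.mul_prod_erase S _ hi]
  have hj' : j ∈ S.erase i := Finset.mem_erase.mpr ⟨hij, hj⟩
  rw [← Finset.mul_prod_erase _ _ hj', ← Finset.mul_prod_erase _ _ hj']
  have hR : ∏ k ∈ (S.erase i).erase j, lf (stepC c c i j) (stepA a a i j) k u
      = ∏ k ∈ (S.erase i).erase j, lf c a k u := by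
    refine Finset.prod_congr rfl fun k hk => ?_
    rw [lf_step_ne (Finset.mem_erase.mp (Finset.mem_erase.mp hk).2).1]
  rw [hR, lf_step_eq, lf_step_ne hij]
  set w := lf c a j u
  set v := lf c a i u
  set R := ∏ k ∈ (S.erase i).erase j, lf c a k u
  have key : w * (v + w + 1) = w * v := z2 w v
  linear_combination R * key

-- cross step: absorbed by the other product
lemma pp_step_cross (S S' : Finset (Fin m)) (c c₂ : Fin m → ZMod 2)
    (a a₂ : Fin m → Fin m → ZMod 2) (j i : Fin m) (hj : j ∈ S) (hi : i ∈ S') :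
    pp S c a * pp S' (stepC c₂ c i j) (stepA a₂ a i j) = pp S c a * pp S' c₂ a₂ := by
  funext u
  show (∏ k ∈ S, lf c a k u) * ∏ k ∈ S', lf (stepC c₂ c i j) (stepA a₂ a i j) k u
    = (∏ k ∈ S, lf c a k u) * ∏ k ∈ S', lf c₂ a₂ k u
  rw [← Finset.mul_prod_erase S _ hj, ← Finset.mul_prod_erase S' _ hi,
    ← Finset.mul_prod_erase S' (fun k => lf c₂ a₂ k u) hi]
  have hR : ∏ k ∈ S'.erase i, lf (stepC c₂ c i j) (stepA a₂ a i j) k u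
      = ∏ k ∈ S'.erase i, lf c₂ a₂ k u := by
    refine Finset.prod_congr rfl fun k hk => ?_
    rw [lf_step_ne (Finset.mem_erase.mp hk).1]
  rw [hR, lf_step_eq]
  set w := lf c a j u
  set v := lf c₂ a₂ i u
  set R₁ := ∏ k ∈ S.erase j, lf c a k u
  set R₂ := ∏ k ∈ S'.erase i, lf c₂ a₂ k u
  have key : w * (v + w + 1) = w * v := z2 w v
  linear_combination R₁ * R₂ * key

end Stmt9

namespace Stmt9
variable {m : ℕ}

lemma sum_range_two_pow (n : ℕ) : ∑ k ∈ Finset.range n, 2 ^ k = 2 ^ n - 1 := by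
  induction n with
  | zero => simp
  | succ n ih =>
    rw [Finset.sum_range_succ, ih]
    have : 1 ≤ 2 ^ n := Nat.one_le_two_pow
    omega

lemma sum_pow_lt (S : Finset (Fin m)) (j : Fin m) (h : ∀ x ∈ S, x < j) :
    ∑ x ∈ S, 2 ^ (x : ℕ) < 2 ^ (j : ℕ) := by
  have h1 : ∑ x ∈ S, 2 ^ (x : ℕ) = ∑ k ∈ S.image Fin.val, 2 ^ k :=
    (Finset.sum_image (fun x _ y _ hxy => Fin.val_injective hxy)).symm
  have h2 : S.image Fin.val ⊆ Finset.range (j : ℕ) := by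
    intro k hk
    obtain ⟨x, hx, rfl⟩ := Finset.mem_image.mp hk
    exact Finset.mem_range.mpr (h x hx)
  have h3 : ∑ k ∈ S.image Fin.val, 2 ^ k ≤ ∑ k ∈ Finset.range (j : ℕ), 2 ^ k :=
    Finset.sum_le_sum_of_subset h2
  rw [h1]
  have := sum_range_two_pow (j : ℕ)
  have : 1 ≤ 2 ^ (j:ℕ) := Nat.one_le_two_pow
  omega

def rowM (T : Finset (Fin m)) (r : Fin m → ZMod 2) : ℕ :=
  ∑ j ∈ T, if r j = 0 then 0 else 2 ^ (j : ℕ)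

lemma rowM_lt (T : Finset (Fin m)) (r r' : Fin m → ZMod 2) (j : Fin m) (hj : j ∈ T)
    (hrj : r j ≠ 0) (h0 : r' j = 0) (hup : ∀ j', j < j' → r' j' = r j') :
    rowM T r' < rowM T r := by
  unfold rowM
  rw [← Finset.sum_filter_add_sum_filter_not T (fun x => j < x),
    ← Finset.sum_filter_add_sum_filter_not T (fun x => j < x)
      (fun x => if r x = 0 then 0 else 2 ^ (x : ℕ))]
  have heq : ∑ x ∈ T.filter (fun x => j < x), (if r' x = 0 then 0 else 2 ^ (x : ℕ))
      = ∑ x ∈ T.filter (fun x => j < x), (if r x = 0 then 0 else 2 ^ (x : ℕ)) := by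
    refine Finset.sum_congr rfl fun x hx => ?_
    rw [hup x (Finset.mem_filter.mp hx).2]
  rw [heq]
  have hjmem : j ∈ T.filter (fun x => ¬ j < x) := Finset.mem_filter.mpr ⟨hj, lt_irrefl j⟩
  have hnew : ∑ x ∈ T.filter (fun x => ¬ j < x), (if r' x = 0 then 0 else 2 ^ (x : ℕ))
      < 2 ^ (j : ℕ) := by
    rw [← Finset.add_sum_erase _ _ hjmem, if_pos h0, zero_add]
    calc ∑ x ∈ (T.filter (fun x => ¬ j < x)).erase j, (if r' x = 0 then 0 else 2 ^ (x : ℕ))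
        ≤ ∑ x ∈ (T.filter (fun x => ¬ j < x)).erase j, 2 ^ (x : ℕ) := by
          refine Finset.sum_le_sum fun x _ => ?_
          split
          · exact Nat.zero_le _
          · exact le_rfl
      _ < 2 ^ (j : ℕ) := by
          refine sum_pow_lt _ _ fun x hx => ?_
          have h1 := Finset.mem_erase.mp hx
          have h2 := (Finset.mem_filter.mp h1.2).2
          exact lt_of_le_of_ne (not_lt.mp h2) h1.1
  have hold : 2 ^ (j : ℕ) ≤ ∑ x ∈ T.filter (fun x => ¬ j < x),
      (if r x = 0 then 0 else 2 ^ (x : ℕ)) := by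
    have := Finset.single_le_sum (f := fun x => if r x = 0 then 0 else 2 ^ (x : ℕ))
      (fun x _ => Nat.zero_le _) hjmem
    simpa [hrj] using this
  omega

lemma sum_rowM_step (S T : Finset (Fin m)) (a asrc : Fin m → Fin m → ZMod 2) (i j : Fin m)
    (hi : i ∈ S) (hj : j ∈ T) (hne : a i j ≠ 0) (hsrc : SL asrc) :
    ∑ i' ∈ S, rowM T (stepA a asrc i j i') < ∑ i' ∈ S, rowM T (a i') := by
  unfold stepA
  rw [← Finset.add_sum_erase S _ hi, ← Finset.add_sum_erase S (fun i' => rowM T (a i')) hi]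
  have herase : ∑ i' ∈ S.erase i, rowM T (Function.update a i (stepRow a asrc i j) i')
      = ∑ i' ∈ S.erase i, rowM T (a i') := by
    refine Finset.sum_congr rfl fun i' hi' => ?_
    rw [Function.update_of_ne (Finset.mem_erase.mp hi').1]
  rw [herase, Function.update_self]
  have hlt : rowM T (stepRow a asrc i j) < rowM T (a i) := by
    refine rowM_lt T (a i) _ j hj hne ?_ ?_
    · show a i j + asrc j j + (if j = j then 1 else 0) = 0
      rw [zne _ hne, hsrc j j (lt_irrefl j), if_pos rfl]
      decide
    · intro j' hjj'
      show a i j' + asrc j j' + (if j' = j then 1 else 0) = a i j'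
      rw [hsrc j j' (by omega), if_neg (by rintro rfl; exact absurd hjj' (lt_irrefl _))]
      ring
  omega

end Stmt9

namespace Stmt9
variable {m : ℕ}

lemma core (hS A B f g : Finset (Fin m))
    (hfc : ∀ j ∈ f, j ∈ A ∨ j ∈ hS) (hgc : ∀ j ∈ g, j ∈ B ∨ j ∈ hS) :
    ∀ (N : ℕ) (c₁ c₂ c₃ : Fin m → ZMod 2) (a₁ a₂ a₃ : Fin m → Fin m → ZMod 2),
      (∑ i ∈ hS, rowM hS (a₁ i)) + (∑ i ∈ A, rowM f (a₂ i)) + (∑ i ∈ B, rowM g (a₃ i)) = N →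
      SL a₁ → SL a₂ → SL a₃ →
      ∃ (c₁' c₂' c₃' : Fin m → ZMod 2) (a₁' a₂' a₃' : Fin m → Fin m → ZMod 2),
        SL a₁' ∧ SL a₂' ∧ SL a₃' ∧
        Avoids hS a₁' ∧ Avoids f a₂' ∧ Avoids g a₃' ∧
        pp hS c₁ a₁ * (pp A c₂ a₂ + pp B c₃ a₃)
          = pp hS c₁' a₁' * (pp A c₂' a₂' + pp B c₃' a₃') := by
  intro N
  induction N using Nat.strong_induction_on with
  | _ N IH =>
  intro c₁ c₂ c₃ a₁ a₂ a₃ hN h1 h2 h3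
  by_cases H1 : ∀ i ∈ hS, ∀ j ∈ hS, a₁ i j = 0
  · by_cases H2 : ∀ i ∈ A, ∀ j ∈ f, a₂ i j = 0
    · by_cases H3 : ∀ i ∈ B, ∀ j ∈ g, a₃ i j = 0
      · -- base case : mask rows outside the index sets
        refine ⟨c₁, c₂, c₃,
          (fun i j => if i ∈ hS then a₁ i j else 0),
          (fun i j => if i ∈ A then a₂ i j else 0),
          (fun i j => if i ∈ B then a₃ i j else 0),
          ?_, ?_, ?_, ?_, ?_, ?_, ?_⟩
        · intro i j hij; dsimp only; split
          · exact h1 i j hij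
          · rfl
        · intro i j hij; dsimp only; split
          · exact h2 i j hij
          · rfl
        · intro i j hij; dsimp only; split
          · exact h3 i j hij
          · rfl
        · intro i j hj; dsimp only; split
          · exact H1 i ‹_› j hj
          · rfl
        · intro i j hj; dsimp only; split
          · exact H2 i ‹_› j hj
          · rfl
        · intro i j hj; dsimp only; split
          · exact H3 i ‹_› j hj
          · rfl
        · rw [pp_congr (S := hS) (c' := c₁)
              (a' := fun i j => if i ∈ hS then a₁ i j else 0)
              (fun _ _ => rfl) (fun i hi => funext fun j => by simp [hi]),
            pp_congr (S := A) (c' := c₂)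
              (a' := fun i j => if i ∈ A then a₂ i j else 0)
              (fun _ _ => rfl) (fun i hi => funext fun j => by simp [hi]),
            pp_congr (S := B) (c' := c₃)
              (a' := fun i j => if i ∈ B then a₃ i j else 0)
              (fun _ _ => rfl) (fun i hi => funext fun j => by simp [hi])]
      · -- a violation in a₃
        push_neg at H3
        obtain ⟨i, hi, j, hj, hne⟩ := H3
        have hji : j < i := by
          by_contra hc; exact hne (h3 i j hc)
        by_cases hjB : j ∈ B
        · -- within-G step
          have hdec := sum_rowM_step B g a₃ a₃ i j hi hj hne h3
          obtain ⟨c₁', c₂', c₃', a₁', a₂', a₃', s1, s2, s3, v1, v2, v3, heq⟩ :=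
            IH _ (by omega) c₁ c₂ (stepC c₃ c₃ i j) a₁ a₂ (stepA a₃ a₃ i j) rfl
              h1 h2 (SL_step h3 h3 hji)
          refine ⟨c₁', c₂', c₃', a₁', a₂', a₃', s1, s2, s3, v1, v2, v3, ?_⟩
          rw [← pp_step_self B c₃ a₃ i j hi hjB (ne_of_lt hji)]
          exact heq
        · -- cross step with H
          have hjh : j ∈ hS := (hgc j hj).resolve_left hjB
          have hdec := sum_rowM_step B g a₃ a₁ i j hi hj hne h1
          obtain ⟨c₁', c₂', c₃', a₁', a₂', a₃', s1, s2, s3, v1, v2, v3, heq⟩ :=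
            IH _ (by omega) c₁ c₂ (stepC c₃ c₁ i j) a₁ a₂ (stepA a₃ a₁ i j) rfl
              h1 h2 (SL_step h3 h1 hji)
          refine ⟨c₁', c₂', c₃', a₁', a₂', a₃', s1, s2, s3, v1, v2, v3, ?_⟩
          calc pp hS c₁ a₁ * (pp A c₂ a₂ + pp B c₃ a₃)
              = pp hS c₁ a₁ * (pp A c₂ a₂ + pp B (stepC c₃ c₁ i j) (stepA a₃ a₁ i j)) := by
                rw [mul_add, mul_add, pp_step_cross hS B c₁ c₃ a₁ a₃ j i hjh hi]
            _ = _ := heq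
    · -- a violation in a₂
      push_neg at H2
      obtain ⟨i, hi, j, hj, hne⟩ := H2
      have hji : j < i := by
        by_contra hc; exact hne (h2 i j hc)
      by_cases hjA : j ∈ A
      · have hdec := sum_rowM_step A f a₂ a₂ i j hi hj hne h2
        obtain ⟨c₁', c₂', c₃', a₁', a₂', a₃', s1, s2, s3, v1, v2, v3, heq⟩ :=
          IH _ (by omega) c₁ (stepC c₂ c₂ i j) c₃ a₁ (stepA a₂ a₂ i j) a₃ rfl
            h1 (SL_step h2 h2 hji) h3
        refine ⟨c₁', c₂', c₃', a₁', a₂', a₃', s1, s2, s3, v1, v2, v3, ?_⟩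
        rw [← pp_step_self A c₂ a₂ i j hi hjA (ne_of_lt hji)]
        exact heq
      · have hjh : j ∈ hS := (hfc j hj).resolve_left hjA
        have hdec := sum_rowM_step A f a₂ a₁ i j hi hj hne h1
        obtain ⟨c₁', c₂', c₃', a₁', a₂', a₃', s1, s2, s3, v1, v2, v3, heq⟩ :=
          IH _ (by omega) c₁ (stepC c₂ c₁ i j) c₃ a₁ (stepA a₂ a₁ i j) a₃ rfl
            h1 (SL_step h2 h1 hji) h3
        refine ⟨c₁', c₂', c₃', a₁', a₂', a₃', s1, s2, s3, v1, v2, v3, ?_⟩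
        calc pp hS c₁ a₁ * (pp A c₂ a₂ + pp B c₃ a₃)
            = pp hS c₁ a₁ * (pp A (stepC c₂ c₁ i j) (stepA a₂ a₁ i j) + pp B c₃ a₃) := by
              rw [mul_add, mul_add, pp_step_cross hS A c₁ c₂ a₁ a₂ j i hjh hi]
          _ = _ := heq
  · -- a violation in a₁
    push_neg at H1
    obtain ⟨i, hi, j, hj, hne⟩ := H1
    have hji : j < i := by
      by_contra hc; exact hne (h1 i j hc)
    have hdec := sum_rowM_step hS hS a₁ a₁ i j hi hj hne h1
    obtain ⟨c₁', c₂', c₃', a₁', a₂', a₃', s1, s2, s3, v1, v2, v3, heq⟩ :=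
      IH _ (by omega) (stepC c₁ c₁ i j) c₂ c₃ (stepA a₁ a₁ i j) a₂ a₃ rfl
        (SL_step h1 h1 hji) h2 h3
    refine ⟨c₁', c₂', c₃', a₁', a₂', a₃', s1, s2, s3, v1, v2, v3, ?_⟩
    rw [← pp_step_self hS c₁ a₁ i j hi hj (ne_of_lt hji)]
    exact heq

end Stmt9

namespace Stmt9
variable {m : ℕ}

lemma orbitSub_subset_orbit (S : Finset (Fin m)) (P : Fn m) :
    orbitSub m S P ⊆ orbit m P := by
  rintro Q ⟨B, ε, ⟨hLT, _, _⟩, rfl⟩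
  exact ⟨B, ε, hLT, rfl⟩

end Stmt9

/-- with `h = gcd(f,g)` for `f,g ∈ I_r`,
`LTA(m,2)·h · (LTA(m,2)·(f/h) + LTA(m,2)·(g/h))
  = LTA(m,2)_h·h · (LTA(m,2)_f·(f/h) + LTA(m,2)_g·(g/h))`. -/
theorem stmt9 (m : ℕ) (hm : 1 ≤ m) (I : Set (Finset (Fin m))) (hdec : Decreasing m I)
    (r : ℕ) (hub : ∀ f ∈ I, f.card ≤ r) (hmax : ∃ f ∈ I, f.card = r)
    (f g : Finset (Fin m)) (hf : f ∈ I) (hg : g ∈ I)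
    (hfr : f.card = r) (hgr : g.card = r) :
    orbit m (monFn m (f ∩ g)) *
        (orbit m (monFn m (f \ (f ∩ g))) + orbit m (monFn m (g \ (f ∩ g)))) =
      orbitSub m (f ∩ g) (monFn m (f ∩ g)) *
        (orbitSub m f (monFn m (f \ (f ∩ g))) +
          orbitSub m g (monFn m (g \ (f ∩ g)))) := by
  apply Set.Subset.antisymm
  · rintro P hP
    rw [Set.mem_mul] at hP
    obtain ⟨p, hp, q, hq, rfl⟩ := hP
    rw [Set.mem_add] at hq
    obtain ⟨q₁, hq₁, q₂, hq₂, rfl⟩ := hq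
    rw [Stmt9.orbit_eq] at hp hq₁ hq₂
    obtain ⟨c₁, a₁, s1, rfl⟩ := hp
    obtain ⟨c₂, a₂, s2, rfl⟩ := hq₁
    obtain ⟨c₃, a₃, s3, rfl⟩ := hq₂
    have hfc : ∀ j ∈ f, j ∈ f \ (f ∩ g) ∨ j ∈ f ∩ g := by
      intro j hj
      by_cases hj2 : j ∈ g
      · exact Or.inr (Finset.mem_inter.mpr ⟨hj, hj2⟩)
      · exact Or.inl (Finset.mem_sdiff.mpr ⟨hj, fun hc => hj2 (Finset.mem_inter.mp hc).2⟩)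
    have hgc : ∀ j ∈ g, j ∈ g \ (f ∩ g) ∨ j ∈ f ∩ g := by
      intro j hj
      by_cases hj2 : j ∈ f
      · exact Or.inr (Finset.mem_inter.mpr ⟨hj2, hj⟩)
      · exact Or.inl (Finset.mem_sdiff.mpr ⟨hj, fun hc => hj2 (Finset.mem_inter.mp hc).1⟩)
    obtain ⟨c₁', c₂', c₃', a₁', a₂', a₃', s1', s2', s3', v1, v2, v3, heq⟩ :=
      Stmt9.core (f ∩ g) (f \ (f ∩ g)) (g \ (f ∩ g)) f g hfc hgc _
        c₁ c₂ c₃ a₁ a₂ a₃ rfl s1 s2 s3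
    rw [heq]
    refine Set.mul_mem_mul ?_ (Set.add_mem_add ?_ ?_)
    · rw [Stmt9.orbitSub_eq (f ∩ g) (f ∩ g) subset_rfl]
      exact ⟨c₁', a₁', s1', v1, rfl⟩
    · rw [Stmt9.orbitSub_eq (f \ (f ∩ g)) f (Finset.sdiff_subset)]
      exact ⟨c₂', a₂', s2', v2, rfl⟩
    · rw [Stmt9.orbitSub_eq (g \ (f ∩ g)) g (Finset.sdiff_subset)]
      exact ⟨c₃', a₃', s3', v3, rfl⟩
  · exact Set.mul_subset_mul (Stmt9.orbitSub_subset_orbit _ _)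
      (Set.add_subset_add (Stmt9.orbitSub_subset_orbit _ _) (Stmt9.orbitSub_subset_orbit _ _))
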